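/- Let A be a category in which subobjects have complements (coproduct inclusions are monomorphisms, and every monomorphism X ↪ Y admits a monomorphism Z ↪ Y making X → Y ← Z a coproduct cocone), and let F : A → B preserve finite coproducts. Then F-structures extend along morphisms for the restriction of F to the subcategory of A with the same objects and only monomorphisms as morphisms. -/

import Mathlib

open CategoryTheory

universe v u v' u'

/-- Subobjects have complements in `A`: coproduct inclusions are monomorphisms, and
every monomorphism `X ↪ Y` admits a monomorphism `Z ↪ Y` making `X → Y ← Z` a
coproduct cocone. -/
def SubobjectsHaveComplements (A : Type u) [Category.{v} A] : Prop :=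
  (∀ {X Z : A} (c : Limits.BinaryCofan X Z), Nonempty (Limits.IsColimit c) →
      Mono c.inl ∧ Mono c.inr) ∧
  (∀ {X Y : A} (m : X ⟶ Y), Mono m →
      ∃ (Z : A) (n : Z ⟶ Y), Mono n ∧
        Nonempty (Limits.IsColimit (Limits.BinaryCofan.mk m n)))

/-- If subobjects have complements in `A` and `F : A ⥤ B` preserves finite coproducts,
then `F`-structures extend along morphisms for the restriction of `F` to the
subcategory of `A` with only monomorphisms as morphisms: for every monomorphism
`g : X ⟶ Y`, object `U` and isomorphism `i : F U ≅ F X`, there exist a monomorphism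
`f : U ⟶ V` and an isomorphism `j : F V ≅ F Y` with `F g ∘ i = j ∘ F f`. -/
theorem extends_of_complements {A : Type u} [Category.{v} A] {B : Type u'}
    [Category.{v'} B] [Limits.HasBinaryCoproducts A]
    (F : A ⥤ B) [Limits.PreservesFiniteCoproducts F]
    (hA : SubobjectsHaveComplements A) :
    ∀ {X Y : A} (g : X ⟶ Y), Mono g → ∀ (U : A) (i : F.obj U ≅ F.obj X),
      ∃ (V : A) (f : U ⟶ V), Mono f ∧
        ∃ j : F.obj V ≅ F.obj Y, i.hom ≫ F.map g = F.map f ≫ j.hom := by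
  intro X Y g hg U i
  obtain ⟨Z, n, hn, ⟨hc⟩⟩ := hA.2 g hg
  have : Limits.PreservesColimitsOfShape (Discrete Limits.WalkingPair) F :=
    inferInstance
  -- F maps the coproduct cocone (g, n) to a colimit
  have hY : Limits.IsColimit (Limits.BinaryCofan.mk (F.map g) (F.map n)) :=
    Limits.mapIsColimitOfPreservesOfIsColimit F g n hc
  -- F maps the standard coproduct cocone of U ⨿ Z to a colimit
  have hV : Limits.IsColimit (Limits.BinaryCofan.mk
      (F.map (Limits.coprod.inl : U ⟶ U ⨿ Z)) (F.map Limits.coprod.inr)) :=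
    Limits.isColimitOfHasBinaryCoproductOfPreservesColimit F U Z
  refine ⟨U ⨿ Z, Limits.coprod.inl, ?_, ?_⟩
  · exact (hA.1 (Limits.BinaryCofan.mk (Limits.coprod.inl : U ⟶ U ⨿ Z) Limits.coprod.inr)
      ⟨Limits.coprodIsCoprod U Z⟩).1
  · have f1 := hV.fac (Limits.BinaryCofan.mk (i.hom ≫ F.map g) (F.map n))
      ⟨Limits.WalkingPair.left⟩
    have f2 := hV.fac (Limits.BinaryCofan.mk (i.hom ≫ F.map g) (F.map n))
      ⟨Limits.WalkingPair.right⟩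
    have g1 := hY.fac (Limits.BinaryCofan.mk (i.inv ≫ F.map (Limits.coprod.inl : U ⟶ U ⨿ Z))
      (F.map (Limits.coprod.inr : Z ⟶ U ⨿ Z))) ⟨Limits.WalkingPair.left⟩
    have g2 := hY.fac (Limits.BinaryCofan.mk (i.inv ≫ F.map (Limits.coprod.inl : U ⟶ U ⨿ Z))
      (F.map (Limits.coprod.inr : Z ⟶ U ⨿ Z))) ⟨Limits.WalkingPair.right⟩
    simp only [Limits.BinaryCofan.mk_pt, Limits.BinaryCofan.ι_app_left,
      Limits.BinaryCofan.ι_app_right, Limits.BinaryCofan.mk_inl,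
      Limits.BinaryCofan.mk_inr] at f1 f2 g1 g2
    refine ⟨⟨hV.desc (Limits.BinaryCofan.mk (i.hom ≫ F.map g) (F.map n)),
      hY.desc (Limits.BinaryCofan.mk (i.inv ≫ F.map Limits.coprod.inl)
        (F.map Limits.coprod.inr)), ?_, ?_⟩, ?_⟩
    · apply Limits.BinaryCofan.IsColimit.hom_ext hV
      · change F.map Limits.coprod.inl ≫ hV.desc (Limits.BinaryCofan.mk (i.hom ≫ F.map g) (F.map n)) ≫
          hY.desc (Limits.BinaryCofan.mk (i.inv ≫ F.map Limits.coprod.inl) (F.map Limits.coprod.inr)) = F.map Limits.coprod.inl ≫ 𝟙 _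
        exact (Category.assoc _ _ _).symm.trans ((congrArg (· ≫ hY.desc (Limits.BinaryCofan.mk (i.inv ≫ F.map Limits.coprod.inl) (F.map Limits.coprod.inr))) f1).trans
          ((Category.assoc _ _ _).trans ((congrArg (i.hom ≫ ·) g1).trans (by simp; rfl))))
      · change F.map Limits.coprod.inr ≫ hV.desc (Limits.BinaryCofan.mk (i.hom ≫ F.map g) (F.map n)) ≫
          hY.desc (Limits.BinaryCofan.mk (i.inv ≫ F.map Limits.coprod.inl) (F.map Limits.coprod.inr)) = F.map Limits.coprod.inr ≫ 𝟙 _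
        exact (Category.assoc _ _ _).symm.trans ((congrArg (· ≫ hY.desc (Limits.BinaryCofan.mk (i.inv ≫ F.map Limits.coprod.inl) (F.map Limits.coprod.inr))) f2).trans
          (g2.trans (by simp; rfl)))
    · apply Limits.BinaryCofan.IsColimit.hom_ext hY
      · change F.map g ≫ hY.desc (Limits.BinaryCofan.mk (i.inv ≫ F.map Limits.coprod.inl) (F.map Limits.coprod.inr)) ≫
          hV.desc (Limits.BinaryCofan.mk (i.hom ≫ F.map g) (F.map n)) = F.map g ≫ 𝟙 _
        exact (Category.assoc _ _ _).symm.trans ((congrArg (· ≫ hV.desc (Limits.BinaryCofan.mk (i.hom ≫ F.map g) (F.map n))) g1).trans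
          ((Category.assoc _ _ _).trans ((congrArg (i.inv ≫ ·) f1).trans (by simp; rfl))))
      · change F.map n ≫ hY.desc (Limits.BinaryCofan.mk (i.inv ≫ F.map Limits.coprod.inl) (F.map Limits.coprod.inr)) ≫
          hV.desc (Limits.BinaryCofan.mk (i.hom ≫ F.map g) (F.map n)) = F.map n ≫ 𝟙 _
        exact (Category.assoc _ _ _).symm.trans ((congrArg (· ≫ hV.desc (Limits.BinaryCofan.mk (i.hom ≫ F.map g) (F.map n))) g2).trans
          (f2.trans (by simp; rfl)))
    · exact f1.symm
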